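/- Let W be a ℂ-vector space and let E(W) = Hom(W, W((x))). Suppose a(x), b(x) ∈ E(W) and there exist b⁽ⁱ⁾(x), a⁽ⁱ⁾(x) ∈ E(W) and f_i(x) ∈ ℂ((x)) (1 ≤ i ≤ r) and k ∈ ℕ such that (x₁−x₂)ᵏ a(x₁)b(x₂) = (x₁−x₂)ᵏ Σᵢ f_i(x₂−x₁) b⁽ⁱ⁾(x₂)a⁽ⁱ⁾(x₁), where f_i(x₂−x₁) is expanded in nonnegative powers of x₁. Then the pair (a(x),b(x)) is compatible: (x₁−x₂)ᵏ a(x₁)b(x₂) ∈ Hom(W, W((x₁,x₂))). -/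
import Mathlib


/-- Generalized binomial coefficient `C(n,m) = n(n−1)⋯(n−m+1)/m!` for `n : ℤ`. -/
noncomputable def genChoose (n : ℤ) (m : ℕ) : ℂ :=
  (∏ j ∈ Finset.range m, ((n : ℂ) - j)) / (m.factorial : ℂ)

/-- Let `W` be a ℂ-vector space and `a(x), b(x), a⁽ⁱ⁾(x), b⁽ⁱ⁾(x)`
elements of `E(W) = Hom(W,W((x)))`, recorded by coefficient maps `ℤ → End(W)`
(writing `a(x) = Σ_m a_m x^m`, lower-truncated on each vector).  Suppose the
`S`-locality relation
`(x₁−x₂)^k a(x₁)b(x₂) = (x₁−x₂)^k Σᵢ f_i(x₂−x₁) b⁽ⁱ⁾(x₂)a⁽ⁱ⁾(x₁)` holds, with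
`f_i ∈ ℂ((x))` and `f_i(x₂−x₁)` expanded in nonnegative powers of `x₁`
(the coefficient of `x₁^s x₂^t` of `f_i(x₂−x₁)` being `(−1)^s C(t+s,s)·(f_i)_{t+s}`).
Then the pair `(a(x),b(x))` is compatible:
`(x₁−x₂)^k a(x₁)b(x₂) ∈ Hom(W,W((x₁,x₂)))`, i.e. for each `w` its coefficients
vanish whenever the exponent of `x₁` or of `x₂` is sufficiently negative. -/
theorem stmt17 {W : Type*} [AddCommGroup W] [Module ℂ W]
    (r : ℕ) (k : ℕ)
    (a b : ℤ → W →ₗ[ℂ] W) (aa bb : Fin r → ℤ → W →ₗ[ℂ] W)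
    (f : Fin r → LaurentSeries ℂ)
    (ha : ∀ w : W, ∃ N : ℤ, ∀ m : ℤ, m < N → a m w = 0)
    (hb : ∀ w : W, ∃ N : ℤ, ∀ m : ℤ, m < N → b m w = 0)
    (haa : ∀ i, ∀ w : W, ∃ N : ℤ, ∀ m : ℤ, m < N → aa i m w = 0)
    (hbb : ∀ i, ∀ w : W, ∃ N : ℤ, ∀ m : ℤ, m < N → bb i m w = 0)
    (hloc : ∀ m n : ℤ, ∀ w : W,
      (∑ j ∈ Finset.range (k + 1),
          ((-1 : ℂ) ^ j * ((k.choose j : ℕ) : ℂ)) •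
            a (m - ((k - j : ℕ) : ℤ)) (b (n - j) w))
        = ∑ j ∈ Finset.range (k + 1),
            ((-1 : ℂ) ^ j * ((k.choose j : ℕ) : ℂ)) •
              (∑ i : Fin r, ∑ᶠ t : ℤ, ∑ᶠ s : ℕ,
                ((-1 : ℂ) ^ s * genChoose (t + s) s * (f i).coeff (t + s)) •
                  bb i (n - j - t) (aa i (m - ((k - j : ℕ) : ℤ) - s) w))) :
    ∀ w : W, ∃ N : ℤ, ∀ m n : ℤ, (m < N ∨ n < N) →
      (∑ j ∈ Finset.range (k + 1),
          ((-1 : ℂ) ^ j * ((k.choose j : ℕ) : ℂ)) •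
            a (m - ((k - j : ℕ) : ℤ)) (b (n - j) w)) = 0 := by
  intro w
  obtain ⟨Nb, hNb⟩ := hb w
  choose Naa hNaa using fun i => haa i w
  have hne : (insert Nb (Finset.image Naa Finset.univ)).Nonempty :=
    ⟨Nb, Finset.mem_insert_self _ _⟩
  refine ⟨(insert Nb (Finset.image Naa Finset.univ)).min' hne, ?_⟩
  set N := (insert Nb (Finset.image Naa Finset.univ)).min' hne with hNdef
  have hN1 : N ≤ Nb := Finset.min'_le _ _ (Finset.mem_insert_self _ _)
  have hN2 : ∀ i, N ≤ Naa i := fun i =>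
    Finset.min'_le _ _ (Finset.mem_insert_of_mem
      (Finset.mem_image_of_mem _ (Finset.mem_univ i)))
  intro m n hmn
  rcases hmn with hm | hn
  · rw [hloc]
    refine Finset.sum_eq_zero fun j hj => ?_
    have h1 : ∀ (i : Fin r) (s : ℕ), aa i (m - ((k - j : ℕ) : ℤ) - s) w = 0 := by
      intro i s
      exact hNaa i _ (by have := hN2 i; omega)
    simp only [h1, map_zero, smul_zero, finsum_zero, Finset.sum_const_zero]
  · refine Finset.sum_eq_zero fun j hj => ?_
    have h1 : b (n - j) w = 0 := hNb _ (by omega)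
    rw [h1, map_zero, smul_zero]
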